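/- For every odd integer n ≥ 3, there exists an integer sequence X of length n with nb_peak(X) = (n−1)/2 − 1 and nb_valley(X) = (n−1)/2; in particular the point (nb_peak, nb_valley) = ((n−1)/2 − 1, (n−1)/2), which lies on the line nb_peak + nb_valley = n − 2, is feasible for every odd length n ≥ 3; together with the feasibility of ((n−1)/2, (n−1)/2 − 1) this shows that the inequality nb_peak + nb_valley ≤ n − 2 is facet defining for odd n. -/

import Mathlib

/-- The signature of an integer sequence: the word over `{<,=,>}` (encoded as
`Ordering.lt`, `Ordering.eq`, `Ordering.gt`) comparing consecutive elements. -/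
def signature (X : List ℤ) : List Ordering :=
  List.zipWith compare X X.tail

/-- The number of peaks of a word `w` over `{<,=,>}`: the number of positions `j`
with `w_j = '>'` such that there is `i < j` with `w_i = '<'` and `w_k = '='`
for all `i < k < j`. -/
noncomputable def nbPeak (w : List Ordering) : ℕ :=
  {j : ℕ | w[j]? = some Ordering.gt ∧
    ∃ i < j, w[i]? = some Ordering.lt ∧
      ∀ k, i < k → k < j → w[k]? = some Ordering.eq}.ncard

/-- The number of valleys of a word `w` over `{<,=,>}`: the number of positions `j`
with `w_j = '<'` such that there is `i < j` with `w_i = '>'` and `w_k = '='`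
for all `i < k < j`. -/
noncomputable def nbValley (w : List Ordering) : ℕ :=
  {j : ℕ | w[j]? = some Ordering.lt ∧
    ∃ i < j, w[i]? = some Ordering.gt ∧
      ∀ k, i < k → k < j → w[k]? = some Ordering.eq}.ncard

/-- For every odd `n ≥ 3`, there is an integer sequence `X` of length `n`
with `nb_peak(X) = (n−1)/2 − 1` and `nb_valley(X) = (n−1)/2`; in particular,
the point `((n−1)/2 − 1, (n−1)/2)`, lying on the line
`nb_peak + nb_valley = n − 2`, is feasible for every odd length `n ≥ 3`. -/
theorem feasible_maxValley_point (n : ℕ) (hn : 3 ≤ n) (hodd : Odd n) :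
    ∃ X : List ℤ, X.length = n ∧
      nbPeak (signature X) = (n - 1) / 2 - 1 ∧
      nbValley (signature X) = (n - 1) / 2 := by
  obtain ⟨m, hm⟩ := hodd
  set X : List ℤ := (List.range n).map (fun j => if j % 2 = 0 then (1:ℤ) else 0) with hXdef
  have hX : X.length = n := by simp [hXdef]
  have hXg : ∀ j (h : j < n), X[j]'(by omega) = if j % 2 = 0 then (1:ℤ) else 0 := by
    intro j h; simp [hXdef]
  have hsiglen : (signature X).length = n - 1 := by
    simp [signature, hX]
  have hw : ∀ j, j < n - 1 →
      (signature X)[j]? = some (if j % 2 = 0 then Ordering.gt else Ordering.lt) := by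
    intro j hj
    have hj' : j < (signature X).length := by rw [hsiglen]; exact hj
    rw [List.getElem?_eq_getElem hj']
    congr 1
    show (List.zipWith compare X X.tail)[j]'(by simpa [signature] using hj') = _
    rw [List.getElem_zipWith]
    rw [List.getElem_tail]
    rw [hXg j (by omega), hXg (j+1) (by omega)]
    rcases Nat.mod_two_eq_zero_or_one j with h | h
    · have h1 : (j+1) % 2 = 1 := by omega
      simp only [h, h1]
      decide
    · have h1 : (j+1) % 2 = 0 := by omega
      simp only [h, h1]
      decide
  have hwnone : ∀ j, n - 1 ≤ j → (signature X)[j]? = none := by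
    intro j hj
    apply List.getElem?_eq_none
    omega
  refine ⟨X, hX, ?_, ?_⟩
  · -- peaks
    have hset : {j : ℕ | (signature X)[j]? = some Ordering.gt ∧
        ∃ i < j, (signature X)[i]? = some Ordering.lt ∧
          ∀ k, i < k → k < j → (signature X)[k]? = some Ordering.eq}
        = ↑((Finset.range (m-1)).image (fun i => 2*i+2)) := by
      ext j
      simp only [Set.mem_setOf_eq, Finset.coe_image, Finset.coe_range, Set.mem_image,
        Set.mem_Iio]
      constructor
      · rintro ⟨hgt, i, hij, hlt, -⟩
        have hjlt : j < n - 1 := by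
          by_contra h
          rw [hwnone j (by omega)] at hgt
          cases hgt
        have hje : j % 2 = 0 := by
          rcases Nat.mod_two_eq_zero_or_one j with h | h
          · exact h
          · rw [hw j hjlt] at hgt; simp [h] at hgt
        exact ⟨j / 2 - 1, by omega, by omega⟩
      · rintro ⟨i, him, rfl⟩
        have hjlt : 2*i+2 < n - 1 := by omega
        refine ⟨by rw [hw _ hjlt]; norm_num, 2*i+1, by omega, ?_, ?_⟩
        · rw [hw (2*i+1) (by omega)]
          have : (2*i+1) % 2 = 1 := by omega
          simp [this]
        · intro k hk1 hk2; omega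
    rw [nbPeak, hset, Set.ncard_coe_finset,
      Finset.card_image_of_injective _ (fun a b hab => by omega), Finset.card_range]
    omega
  · -- valleys
    have hset : {j : ℕ | (signature X)[j]? = some Ordering.lt ∧
        ∃ i < j, (signature X)[i]? = some Ordering.gt ∧
          ∀ k, i < k → k < j → (signature X)[k]? = some Ordering.eq}
        = ↑((Finset.range m).image (fun i => 2*i+1)) := by
      ext j
      simp only [Set.mem_setOf_eq, Finset.coe_image, Finset.coe_range, Set.mem_image,
        Set.mem_Iio]
      constructor
      · rintro ⟨hlt, i, hij, hgt, -⟩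
        have hjlt : j < n - 1 := by
          by_contra h
          rw [hwnone j (by omega)] at hlt
          cases hlt
        have hje : j % 2 = 1 := by
          rcases Nat.mod_two_eq_zero_or_one j with h | h
          · rw [hw j hjlt] at hlt; simp [h] at hlt
          · exact h
        exact ⟨j / 2, by omega, by omega⟩
      · rintro ⟨i, him, rfl⟩
        have hjlt : 2*i+1 < n - 1 := by omega
        refine ⟨?_, 2*i, by omega, ?_, ?_⟩
        · rw [hw _ hjlt]
          have : (2*i+1) % 2 = 1 := by omega
          simp [this]
        · rw [hw (2*i) (by omega)]
          have : (2*i) % 2 = 0 := by omega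
          simp [this]
        · intro k hk1 hk2; omega
    rw [nbValley, hset, Set.ncard_coe_finset,
      Finset.card_image_of_injective _ (fun a b hab => by omega), Finset.card_range]
    omega
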